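/- Suppose rectangle R' = (-a'/2,a'/2) x (-b'/2,b'/2) with a' < a and b' >= b, and suppose at time 0 there is a vertical plus-crossing of R' in the scaled triangular sublattice delta*B by an s-path. Then for all sufficiently small delta, at time 1 of the alternating majority dynamics there is a vertical plus-crossing of R = (-a/2,a/2) x (-b/2,b/2) in the scaled hexagonal lattice delta*H. -/

import Mathlib

open MeasureTheory

/-- Vertices of the hexagonal (honeycomb) lattice: two sites per unit cell of `ℤ × ℤ`. -/
abbrev Hex := ℤ × ℤ × Bool

/-- Base adjacency relation generating the hexagonal lattice: the `A`-site (`false`) of cell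
`(i,j)` is adjacent to the `B`-sites (`true`) of cells `(i,j)`, `(i-1,j)`, `(i,j-1)`. -/
def hexRel (u v : Hex) : Prop :=
  u.2.2 = false ∧ v.2.2 = true ∧
    ((v.1, v.2.1) = (u.1, u.2.1) ∨ (v.1, v.2.1) = (u.1 - 1, u.2.1) ∨
      (v.1, v.2.1) = (u.1, u.2.1 - 1))

/-- The hexagonal lattice as a simple graph; every vertex has degree 3. -/
def HexGraph : SimpleGraph Hex := SimpleGraph.fromRel hexRel

/-- Membership in the sublattice `A`. -/
def isA (v : Hex) : Prop := v.2.2 = false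

/-- Membership in the sublattice `B`. -/
def isB (v : Hex) : Prop := v.2.2 = true

/-- Adjacency of two `B`-sites (graph distance 2 in `H`, via a common `A`-neighbor);
this makes `B` a triangular lattice. -/
def Badj (y y' : Hex) : Prop :=
  isB y ∧ isB y' ∧ y ≠ y' ∧ ∃ z, isA z ∧ HexGraph.Adj y z ∧ HexGraph.Adj z y'

/-- The triangular lattice as a graph on `ℤ × ℤ` (each vertex has 6 neighbors). -/
def triRel (u v : ℤ × ℤ) : Prop :=
  (v.1 - u.1, v.2 - u.2) ∈ ({(1, 0), (0, 1), (1, -1)} : Set (ℤ × ℤ))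

def TriGraph : SimpleGraph (ℤ × ℤ) := SimpleGraph.fromRel triRel

/-- The three `H`-neighbors of a hexagonal-lattice site. -/
def nbrsT : Hex → Hex × Hex × Hex
  | (i, j, true) => ((i, j, false), (i + 1, j, false), (i, j + 1, false))
  | (i, j, false) => ((i, j, true), (i - 1, j, true), (i, j - 1, true))

/-- The majority of the spins of the three neighbors of `x`; a spin flips iff it disagrees
with at least two of its three neighbors, i.e. the updated value is this majority. -/
def majAt (σ : Hex → Bool) (x : Hex) : Bool :=
  let n := nbrsT x
  (σ n.1 && σ n.2.1) || (σ n.1 && σ n.2.2) || (σ n.2.1 && σ n.2.2)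

/-- Update of the sublattice `A`. -/
def updA (σ : Hex → Bool) : Hex → Bool := fun x =>
  if x.2.2 = false then majAt σ x else σ x

/-- Update of the sublattice `B`. -/
def updB (σ : Hex → Bool) : Hex → Bool := fun x =>
  if x.2.2 = true then majAt σ x else σ x

/-- The zero-temperature alternating-sublattice majority dynamics: `A` is updated at odd
times, `B` at even times. -/
def evolve (σ0 : Hex → Bool) : ℕ → Hex → Bool
  | 0 => σ0
  | n + 1 => if (n + 1) % 2 = 1 then updA (evolve σ0 n) else updB (evolve σ0 n)

/-- `z` is the common `A`-neighbor linking the (B-adjacent) pair `p`. -/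
def IsLink (p : Hex × Hex) (z : Hex) : Prop :=
  isA z ∧ HexGraph.Adj p.1 z ∧ HexGraph.Adj z p.2

/-- A (site-self-avoiding) path in the triangular sublattice `B`. -/
def IsPathB (l : List Hex) : Prop :=
  (∀ y ∈ l, isB y) ∧ l.Chain' Badj ∧ l.Nodup

/-- An s-path: a path in `B` whose consecutive-pair common `A`-neighbors are all distinct. -/
def IsSPath (l : List Hex) : Prop :=
  IsPathB l ∧ ∃ zs : List Hex, List.Forall₂ IsLink (l.zip l.tail) zs ∧ zs.Nodup

/-- A simple loop in the triangular sublattice `B`, recorded by its (distinct) sites. -/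
def IsLoopB (l : List Hex) : Prop :=
  (∀ y ∈ l, isB y) ∧ l.Nodup ∧ 3 ≤ l.length ∧ (l ++ l.take 1).Chain' Badj

/-- An s-loop: a loop in `B` whose consecutive-pair common `A`-neighbors are all distinct. -/
def IsSLoop (l : List Hex) : Prop :=
  IsLoopB l ∧ ∃ zs : List Hex,
    List.Forall₂ IsLink ((l ++ l.take 1).zip (l ++ l.take 1).tail) zs ∧ zs.Nodup

/-- A star: a triangle in `B` whose three sites have a common `A`-neighbor. -/
def IsStar (a b c : Hex) : Prop :=
  Badj a b ∧ Badj b c ∧ Badj c a ∧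
    ∃ z, isA z ∧ HexGraph.Adj a z ∧ HexGraph.Adj b z ∧ HexGraph.Adj c z

/-- An antistar: a triangle in `B` whose three sites have no common `A`-neighbor. -/
def IsAntistarSet (t : Finset Hex) : Prop :=
  ∃ a b c : Hex, t = {a, b, c} ∧ Badj a b ∧ Badj b c ∧ Badj c a ∧
    ¬ ∃ z, isA z ∧ HexGraph.Adj a z ∧ HexGraph.Adj b z ∧ HexGraph.Adj c z

/-- The partial cluster `C_{(x,x')}`: sites of `B` reachable from `x'` by a self-avoiding
path of constant `σ`-sign whose first step avoids `x` and does not form a star with `x`. -/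
def partialCluster (σ : Hex → Bool) (x x' : Hex) : Set Hex :=
  {y | ∃ l : List Hex, IsPathB l ∧ (∀ w ∈ l, σ w = σ x') ∧
        l.head? = some x' ∧ l.getLast? = some y ∧
        ∀ h : 1 < l.length, l.get ⟨1, h⟩ ≠ x ∧ ¬ IsStar x' (l.get ⟨1, h⟩) x}

/-- The open cluster of `x0` (for `σ`-open sites) in the triangular sublattice `B`. -/
def openCluster (σ : Hex → Bool) (x0 : Hex) : Set Hex :=
  {y | ∃ l : List Hex, IsPathB l ∧ (∀ w ∈ l, σ w = true) ∧
        l.head? = some x0 ∧ l.getLast? = some y}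

/-- A barbell: two vertex-disjoint simple cycles connected by a path (a single simple cycle
being a degenerate barbell), recorded as its set of sites. -/
def IsBarbell (S : Set Hex) : Prop :=
  (∃ (u : Hex) (c : HexGraph.Walk u u), c.IsCycle ∧ S = {x | x ∈ c.support}) ∨
  (∃ (u v w1 w2 : Hex) (c1 : HexGraph.Walk u u) (c2 : HexGraph.Walk v v)
      (p : HexGraph.Walk w1 w2), c1.IsCycle ∧ c2.IsCycle ∧
      Disjoint {x | x ∈ c1.support} {x | x ∈ c2.support} ∧ p.IsPath ∧
      w1 ∈ c1.support ∧ w2 ∈ c2.support ∧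
      S = {x | x ∈ c1.support} ∪ {x | x ∈ c2.support} ∪ {x | x ∈ p.support})

/-- Standard planar embedding of the triangular lattice (unit mesh). -/
noncomputable def embT (p : ℤ × ℤ) : ℝ × ℝ :=
  ((p.1 : ℝ) + (p.2 : ℝ) / 2, (p.2 : ℝ) * Real.sqrt 3 / 2)

/-- Planar embedding of the hexagonal lattice: `B`-sites at triangular-lattice points,
`A`-sites at the centroids of their three `B`-neighbors. -/
noncomputable def embH (v : Hex) : ℝ × ℝ :=
  if v.2.2 then embT (v.1, v.2.1)
  else (((embT (v.1, v.2.1)).1 + (embT (v.1 - 1, v.2.1)).1 + (embT (v.1, v.2.1 - 1)).1) / 3,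
        ((embT (v.1, v.2.1)).2 + (embT (v.1 - 1, v.2.1)).2 + (embT (v.1, v.2.1 - 1)).2) / 3)

/-- The open rectangle `(-a/2, a/2) × (-b/2, b/2)`. -/
def rectR (a b : ℝ) : Set (ℝ × ℝ) := Set.Ioo (-a / 2) (a / 2) ×ˢ Set.Ioo (-b / 2) (b / 2)

def topSide (a b : ℝ) : Set (ℝ × ℝ) := Set.Icc (-a / 2) (a / 2) ×ˢ ({b / 2} : Set ℝ)
def bottomSide (a b : ℝ) : Set (ℝ × ℝ) := Set.Icc (-a / 2) (a / 2) ×ˢ ({-b / 2} : Set ℝ)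
def leftSide (a b : ℝ) : Set (ℝ × ℝ) := ({-a / 2} : Set ℝ) ×ˢ Set.Icc (-b / 2) (b / 2)
def rightSide (a b : ℝ) : Set (ℝ × ℝ) := ({a / 2} : Set ℝ) ×ˢ Set.Icc (-b / 2) (b / 2)

/-- A lattice crossing of a region, following the paper: a path `x_0, …, x_{m+1}` of good
sites, with `δ x_1, …, δ x_m` inside the region, the segment from `δ x_0` to `δ x_1`
touching the starting side and the segment from `δ x_m` to `δ x_{m+1}` touching the
ending side. -/
def LatticeCrossing {α : Type*} (Adj : α → α → Prop) (good : α → Prop) (e : α → ℝ × ℝ)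
    (δ : ℝ) (inside startSide endSide : Set (ℝ × ℝ)) : Prop :=
  ∃ (m : ℕ) (f : ℕ → α), 1 ≤ m ∧ (∀ i ≤ m, Adj (f i) (f (i + 1))) ∧
    (∀ i ≤ m + 1, good (f i)) ∧
    (∀ i, 1 ≤ i → i ≤ m → δ • e (f i) ∈ inside) ∧
    (segment ℝ (δ • e (f 0)) (δ • e (f 1)) ∩ startSide).Nonempty ∧
    (segment ℝ (δ • e (f m)) (δ • e (f (m + 1))) ∩ endSide).Nonempty

/-- Vertical plus-crossing of the rectangle `R(a,b)` in the mesh-`δ` hexagonal lattice. -/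
def VPlusCrossHex (σ : Hex → Bool) (δ a b : ℝ) : Prop :=
  LatticeCrossing HexGraph.Adj (fun v => σ v = true) embH δ (rectR a b) (topSide a b)
    (bottomSide a b)

/-- Horizontal minus-crossing of `R(a,b)` in the mesh-`δ` hexagonal lattice. -/
def HMinusCrossHex (σ : Hex → Bool) (δ a b : ℝ) : Prop :=
  LatticeCrossing HexGraph.Adj (fun v => σ v = false) embH δ (rectR a b) (leftSide a b)
    (rightSide a b)

/-- Horizontal minus-crossing of `R(a,b)` in the mesh-`δ` triangular sublattice `B`. -/
def HMinusCrossB (σ : Hex → Bool) (δ a b : ℝ) : Prop :=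
  LatticeCrossing Badj (fun v => σ v = false) embH δ (rectR a b) (leftSide a b)
    (rightSide a b)

/-- Vertical plus-crossing of `R(a,b)` in the mesh-`δ` sublattice `B` realized by an s-path. -/
def SPathVPlusCrossB (σ : Hex → Bool) (δ a b : ℝ) : Prop :=
  ∃ (m : ℕ) (f : ℕ → Hex), 1 ≤ m ∧
    IsSPath (List.ofFn fun i : Fin (m + 2) => f i) ∧
    (∀ i ≤ m + 1, σ (f i) = true) ∧
    (∀ i, 1 ≤ i → i ≤ m → δ • embH (f i) ∈ rectR a b) ∧
    (segment ℝ (δ • embH (f 0)) (δ • embH (f 1)) ∩ topSide a b).Nonempty ∧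
    (segment ℝ (δ • embH (f m)) (δ • embH (f (m + 1))) ∩ bottomSide a b).Nonempty

/-- The six triangular-lattice neighbors of a site. -/
def triNbrs (p : ℤ × ℤ) : List (ℤ × ℤ) :=
  [(p.1 + 1, p.2), (p.1 - 1, p.2), (p.1, p.2 + 1), (p.1, p.2 - 1),
    (p.1 + 1, p.2 - 1), (p.1 - 1, p.2 + 1)]

/-- One step of the deterministic cellular automaton on the triangular lattice: the spin
at `p` flips iff at least two of its three designated neighbor-pairs are monochromatic
of the opposite sign. -/
def autoStep (τ : ℤ × ℤ → Bool) (p : ℤ × ℤ) : Bool :=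
  let v := τ p
  let q1 := (τ (p.1 - 1, p.2) == !v) && (τ (p.1, p.2 - 1) == !v)
  let q2 := (τ (p.1 + 1, p.2) == !v) && (τ (p.1 + 1, p.2 - 1) == !v)
  let q3 := (τ (p.1 - 1, p.2 + 1) == !v) && (τ (p.1, p.2 + 1) == !v)
  cond ((q1 && q2) || (q1 && q3) || (q2 && q3)) (!v) v

/-- The automaton dynamics on the triangular lattice. -/
def autoEvolve (τ0 : ℤ × ℤ → Bool) : ℕ → ℤ × ℤ → Bool
  | 0 => τ0
  | m + 1 => autoStep (autoEvolve τ0 m)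

/-- The Gauss hypergeometric function `₂F₁`, as a power series. -/
noncomputable def hyp2F1 (a b c x : ℝ) : ℝ :=
  ∑' n : ℕ, ((ascPochhammer ℝ n).eval a * (ascPochhammer ℝ n).eval b /
    (ascPochhammer ℝ n).eval c) * x ^ n / (n.factorial : ℝ)

/-- Cardy's formula `F_C(η)`. -/
noncomputable def cardyF (η : ℝ) : ℝ :=
  (Real.Gamma (2 / 3) / (Real.Gamma (4 / 3) * Real.Gamma (1 / 3))) * η ^ ((1 : ℝ) / 3) *
    hyp2F1 (1 / 3) (2 / 3) (4 / 3) η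

lemma adjBA {y z : Hex} (hy : y.2.2 = true) (h : HexGraph.Adj y z) :
    z.2.2 = false ∧ ((y.1 = z.1 ∧ y.2.1 = z.2.1) ∨ (y.1 = z.1 - 1 ∧ y.2.1 = z.2.1) ∨
      (y.1 = z.1 ∧ y.2.1 = z.2.1 - 1)) := by
  rw [HexGraph, SimpleGraph.fromRel_adj] at h
  obtain ⟨hne, h | h⟩ := h
  · exact absurd h.1 (by simp [hy])
  · obtain ⟨hz, -, h3⟩ := h
    refine ⟨hz, ?_⟩
    rcases h3 with h3 | h3 | h3 <;> [left; (right; left); (right; right)] <;>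
      exact Prod.mk.injEq .. ▸ Prod.ext_iff.mp h3

lemma embH_A_eq (z1 z2 : ℤ) :
    embH (z1, z2, false) = ((z1 : ℝ) + (z2 : ℝ) / 2 - 1 / 2,
      (z2 : ℝ) * Real.sqrt 3 / 2 - Real.sqrt 3 / 6) := by
  simp only [embH, embT]
  norm_num
  constructor <;> push_cast <;> ring

lemma embH_B_eq (y1 y2 : ℤ) :
    embH (y1, y2, true) = ((y1 : ℝ) + (y2 : ℝ) / 2, (y2 : ℝ) * Real.sqrt 3 / 2) := by
  simp [embH, embT]

lemma step_bound {y z : Hex} (hy : y.2.2 = true) (h : HexGraph.Adj y z) :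
    |(embH y).1 - (embH z).1| ≤ 1 ∧ |(embH y).2 - (embH z).2| ≤ 1 := by
  obtain ⟨hz, hc⟩ := adjBA hy h
  obtain ⟨y1, y2, y3⟩ := y
  obtain ⟨z1, z2, z3⟩ := z
  simp only at hy hz hc
  subst hy hz
  rw [embH_B_eq, embH_A_eq]
  have h3 : Real.sqrt 3 ≤ 3 := by
    nlinarith [Real.sq_sqrt (by norm_num : (3:ℝ) ≥ 0), Real.sqrt_nonneg 3]
  have h3' : (0:ℝ) ≤ Real.sqrt 3 := Real.sqrt_nonneg 3
  rcases hc with ⟨h1, h2⟩ | ⟨h1, h2⟩ | ⟨h1, h2⟩ <;> subst h1 <;> subst h2 <;>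
    constructor <;> rw [abs_le] <;> push_cast <;> constructor <;> nlinarith

lemma updA_B {σ : Hex → Bool} {y : Hex} (hy : y.2.2 = true) : updA σ y = σ y := by
  simp [updA, hy]

lemma evolve_one (σ0 : Hex → Bool) : evolve σ0 1 = updA σ0 := by
  simp [evolve]

lemma mem_three {y : Hex} {z1 z2 : ℤ} (hy : y.2.2 = true)
    (hc : (y.1 = z1 ∧ y.2.1 = z2) ∨ (y.1 = z1 - 1 ∧ y.2.1 = z2) ∨ (y.1 = z1 ∧ y.2.1 = z2 - 1)) :
    y = ((z1, z2, true) : Hex) ∨ y = ((z1 - 1, z2, true) : Hex) ∨ y = ((z1, z2 - 1, true) : Hex) := by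
  obtain ⟨u1, u2, u3⟩ := y
  simp only at hy hc ⊢
  subst hy
  rcases hc with ⟨e1, e2⟩ | ⟨e1, e2⟩ | ⟨e1, e2⟩ <;> subst e1 <;> subst e2 <;> simp

lemma link_plus {σ : Hex → Bool} {y y' z : Hex} (hy : y.2.2 = true) (hy' : y'.2.2 = true)
    (hne : y ≠ y') (h1 : HexGraph.Adj y z) (h2 : HexGraph.Adj z y')
    (hs : σ y = true) (hs' : σ y' = true) : updA σ z = true := by
  obtain ⟨hz, hc⟩ := adjBA hy h1
  obtain ⟨-, hc'⟩ := adjBA hy' h2.symm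
  obtain ⟨z1, z2, z3⟩ := z
  simp only at hz hc hc'
  subst hz
  have dy := mem_three hy hc
  have dy' := mem_three hy' hc'
  rw [updA]
  simp only [majAt, nbrsT]
  rcases dy with rfl | rfl | rfl <;> rcases dy' with rfl | rfl | rfl <;>
    first
    | exact absurd rfl hne
    | simp [hs, hs']

lemma seg_meets {u v : ℝ × ℝ} {lo hi c : ℝ} (hu1 : lo ≤ u.1) (hu2 : u.1 ≤ hi)
    (hv1 : lo ≤ v.1) (hv2 : v.1 ≤ hi) (hcu : c ≤ u.2) (hvc : v.2 ≤ c) :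
    (segment ℝ u v ∩ (Set.Icc lo hi ×ˢ ({c} : Set ℝ))).Nonempty := by
  by_cases hd : u.2 = v.2
  · refine ⟨u, left_mem_segment ℝ u v, ⟨⟨hu1, hu2⟩, ?_⟩⟩
    show u.2 = c
    rw [hd] at hcu; linarith
  · have hdpos : 0 < u.2 - v.2 := by
      rcases lt_or_gt_of_ne hd with h | h
      · linarith
      · linarith
    set t := (u.2 - c) / (u.2 - v.2) with ht
    have ht0 : 0 ≤ t := div_nonneg (by linarith) (by linarith)
    have ht1 : t ≤ 1 := by
      rw [div_le_one hdpos]; linarith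
    refine ⟨(1 - t) • u + t • v, ⟨1 - t, t, by linarith, ht0, by ring, rfl⟩, ⟨?_, ?_⟩⟩
    · constructor <;> simp only [Prod.fst_add, Prod.smul_fst, smul_eq_mul] <;> nlinarith
    · show (1 - t) * u.2 + t * v.2 = c
      have hne' : u.2 - v.2 ≠ 0 := ne_of_gt hdpos
      rw [ht]
      field_simp
      ring
lemma seg_range {u v w : ℝ × ℝ} (hw : w ∈ segment ℝ u v) :
    min u.2 v.2 ≤ w.2 ∧ w.2 ≤ max u.2 v.2 := by
  obtain ⟨s, t, hs, ht, hst, rfl⟩ := hw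
  simp only [Prod.snd_add, Prod.smul_snd, smul_eq_mul]
  constructor
  · have e : s * (u.2 ⊓ v.2) + t * (u.2 ⊓ v.2) = u.2 ⊓ v.2 := by rw [← add_mul, hst, one_mul]
    have h1 := mul_le_mul_of_nonneg_left (min_le_left u.2 v.2) hs
    have h2 := mul_le_mul_of_nonneg_left (min_le_right u.2 v.2) ht
    linarith
  · have e : s * (u.2 ⊔ v.2) + t * (u.2 ⊔ v.2) = u.2 ⊔ v.2 := by rw [← add_mul, hst, one_mul]
    have h1 := mul_le_mul_of_nonneg_left (le_max_left u.2 v.2) hs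
    have h2 := mul_le_mul_of_nonneg_left (le_max_right u.2 v.2) ht
    linarith

lemma chain_ofFn {m : ℕ} {f : ℕ → Hex} (h : IsSPath (List.ofFn fun i : Fin (m + 2) => f i)) :
    ∀ i ≤ m, Badj (f i) (f (i + 1)) := by
  intro i hi
  have hc := h.1.2.1
  simp only [List.Chain'] at hc; rw [List.isChain_iff_getElem] at hc
  have hlen : (List.ofFn fun i : Fin (m + 2) => f i).length = m + 2 := List.length_ofFn
  have := hc i (by rw [hlen]; omega)
  rw [List.getElem_ofFn, List.getElem_ofFn] at this
  simpa using this

set_option maxHeartbeats 1000000 in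
/-- an s-path vertical plus-crossing of `R'` in `δ·B` at time 0 yields, for
all small `δ`, a vertical plus-crossing of `R` in `δ·H` at time 1. -/
theorem spath_crossing_persists (a b a' b' : ℝ) (ha' : 0 < a') (haa : a' < a)
    (hb : 0 < b) (hbb : b ≤ b') :
    ∃ δ0 : ℝ, 0 < δ0 ∧ ∀ δ : ℝ, 0 < δ → δ < δ0 → ∀ σ0 : Hex → Bool,
      SPathVPlusCrossB σ0 δ a' b' → VPlusCrossHex (evolve σ0 1) δ a b := by
  classical
  refine ⟨min ((a - a') / 4) (b / 2), lt_min (by linarith) (by linarith), ?_⟩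
  intro δ hδ hδ0 σ0 hcross
  have hδa : δ < (a - a') / 4 := lt_of_lt_of_le hδ0 (min_le_left _ _)
  have hδb : δ < b / 2 := lt_of_lt_of_le hδ0 (min_le_right _ _)
  obtain ⟨m, f, hm, hsp, hplus, hrect, htop, hbot⟩ := hcross
  have hB := chain_ofFn hsp
  have hfB : ∀ i ≤ m + 1, (f i).2.2 = true := by
    intro i hi
    rcases Nat.lt_or_ge i (m + 1) with h | h
    · exact (hB i (by omega)).1
    · have : i = m + 1 := by omega
      subst this; exact (hB m le_rfl).2.1
  have hzex : ∀ i : ℕ, ∃ w : Hex, i ≤ m → HexGraph.Adj (f i) w ∧ HexGraph.Adj w (f (i + 1)) := by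
    intro i
    by_cases h : i ≤ m
    · obtain ⟨w, -, hw1, hw2⟩ := (hB i h).2.2.2
      exact ⟨w, fun _ => ⟨hw1, hw2⟩⟩
    · exact ⟨(0, 0, false), fun h' => absurd h' h⟩
  choose zf hzf using hzex
  set g : ℕ → Hex := fun k => if k % 2 = 0 then f (k / 2) else zf (k / 2) with hgdef
  have hge : ∀ i, g (2 * i) = f i := by
    intro i; show (if (2 * i) % 2 = 0 then f ((2 * i) / 2) else zf ((2 * i) / 2)) = f i
    rw [if_pos (by omega)]; congr 1; omega
  have hgo : ∀ i, g (2 * i + 1) = zf i := by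
    intro i; show (if (2 * i + 1) % 2 = 0 then f ((2 * i + 1) / 2) else zf ((2 * i + 1) / 2)) = zf i
    rw [if_neg (by omega)]; congr 1; omega
  have hadj : ∀ k, k ≤ 2 * m + 1 → HexGraph.Adj (g k) (g (k + 1)) := by
    intro k hk
    rcases Nat.even_or_odd k with ⟨i, rfl⟩ | ⟨i, rfl⟩
    · have e : i + i = 2 * i := by omega
      rw [e, hge, hgo]
      exact (hzf i (by omega)).1
    · have e : 2 * i + 1 + 1 = 2 * (i + 1) := by omega
      rw [hgo, e, hge]
      exact (hzf i (by omega)).2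
  have hσ1 : ∀ k ≤ 2 * m + 2, evolve σ0 1 (g k) = true := by
    intro k hk
    rw [evolve_one]
    rcases Nat.even_or_odd k with ⟨i, rfl⟩ | ⟨i, rfl⟩
    · have e : i + i = 2 * i := by omega
      have hi : i ≤ m + 1 := by omega
      rw [e, hge, updA_B (hfB i hi)]
      exact hplus i hi
    · have hi : i ≤ m := by omega
      rw [hgo]
      exact link_plus (hfB i (by omega)) (hfB (i + 1) (by omega)) (hB i hi).2.2.1
        (hzf i hi).1 (hzf i hi).2 (hplus i (by omega)) (hplus (i + 1) (by omega))
  set X : ℕ → ℝ := fun k => δ * (embH (g k)).1 with hXdef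
  set Y : ℕ → ℝ := fun k => δ * (embH (g k)).2 with hYdef
  have hkey : ∀ y z : Hex, y.2.2 = true → HexGraph.Adj y z →
      |δ * (embH y).1 - δ * (embH z).1| ≤ δ ∧ |δ * (embH y).2 - δ * (embH z).2| ≤ δ := by
    intro y z h1 h2
    obtain ⟨e1, e2⟩ := step_bound h1 h2
    constructor <;> rw [← mul_sub, abs_mul, abs_of_pos hδ] <;>
      nlinarith
  have hstep : ∀ k, k ≤ 2 * m + 1 → |X (k + 1) - X k| ≤ δ ∧ |Y (k + 1) - Y k| ≤ δ := by
    intro k hk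
    rcases Nat.even_or_odd k with ⟨i, rfl⟩ | ⟨i, rfl⟩
    · have e : i + i = 2 * i := by omega
      have h := hkey (f i) (zf i) (hfB i (by omega)) (hzf i (by omega)).1
      rw [e]
      show |δ * (embH (g (2 * i + 1))).1 - δ * (embH (g (2 * i))).1| ≤ δ ∧
        |δ * (embH (g (2 * i + 1))).2 - δ * (embH (g (2 * i))).2| ≤ δ
      rw [hge, hgo, abs_sub_comm, abs_sub_comm (δ * (embH (zf i)).2)]
      exact h
    · have e : 2 * i + 1 + 1 = 2 * (i + 1) := by omega
      have h := hkey (f (i + 1)) (zf i) (hfB (i + 1) (by omega)) (hzf i (by omega)).2.symm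
      show |X (2 * i + 1 + 1) - X (2 * i + 1)| ≤ δ ∧ |Y (2 * i + 1 + 1) - Y (2 * i + 1)| ≤ δ
      rw [e]
      show |δ * (embH (g (2 * (i + 1)))).1 - δ * (embH (g (2 * i + 1))).1| ≤ δ ∧
        |δ * (embH (g (2 * (i + 1)))).2 - δ * (embH (g (2 * i + 1))).2| ≤ δ
      rw [hge, hgo]
      exact h
  have hXint : ∀ i, 1 ≤ i → i ≤ m → |X (2 * i)| < a' / 2 := by
    intro i h1 h2
    have h := hrect i h1 h2
    rw [rectR, Set.mem_prod, Set.mem_Ioo, Set.mem_Ioo] at h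
    have e : X (2 * i) = (δ • embH (f i)).1 := by
      show δ * (embH (g (2 * i))).1 = _
      rw [hge]; rfl
    rw [e, abs_lt]
    exact ⟨by linarith [h.1.1], h.1.2⟩
  have hXa : ∀ k, k ≤ 2 * m + 2 → |X k| < a / 2 := by
    have key : ∀ r : ℝ, |r| < a' / 2 + 2 * δ → |r| < a / 2 := by
      intro r hr; rw [abs_lt] at hr ⊢; constructor <;> nlinarith
    intro k hk
    rcases Nat.even_or_odd k with ⟨i, rfl⟩ | ⟨i, rfl⟩
    · have e : i + i = 2 * i := by omega
      rw [e]
      rcases Nat.eq_zero_or_pos i with rfl | hipos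
      · have h01 := (hstep 0 (by omega)).1
        have h12 := (hstep 1 (by omega)).1
        have h2 := hXint 1 le_rfl hm
        apply key
        rw [abs_le] at h01 h12
        rw [abs_lt] at h2 ⊢
        have e0 : (2 : ℕ) * 0 = 0 := by norm_num
        rw [e0]
        have e2 : (1 : ℕ) + 1 = 2 * 1 := by norm_num
        rw [e2] at h12
        constructor <;> [linarith [h01.1, h01.2, h12.1, h12.2, h2.1, h2.2];
          linarith [h01.1, h01.2, h12.1, h12.2, h2.1, h2.2]]
      · rcases Nat.lt_or_ge i (m + 1) with hi | hi
        · have := hXint i hipos (by omega)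
          apply key; rw [abs_lt] at this ⊢; constructor <;> linarith
        · have e1 : i = m + 1 := by omega
          subst e1
          have h01 := (hstep (2 * m + 1) (by omega)).1
          have h12 := (hstep (2 * m) (by omega)).1
          have h2 := hXint m hm le_rfl
          apply key
          rw [abs_le] at h01 h12
          rw [abs_lt] at h2 ⊢
          have e2 : 2 * (m + 1) = 2 * m + 1 + 1 := by omega
          rw [e2]
          have e3 : 2 * m + 1 = 2 * m + 1 := rfl
          constructor <;> linarith [h01.1, h01.2, h12.1, h12.2, h2.1, h2.2]
    · have hi : i ≤ m := by omega
      rcases Nat.eq_zero_or_pos i with rfl | hipos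
      · have h12 := (hstep 1 (by omega)).1
        have h2 := hXint 1 le_rfl hm
        apply key
        rw [abs_le] at h12
        rw [abs_lt] at h2 ⊢
        have e2 : (1 : ℕ) + 1 = 2 * 1 := by norm_num
        rw [e2] at h12
        have e0 : 2 * (0:ℕ) + 1 = 1 := by norm_num
        rw [e0]
        constructor <;> linarith [h12.1, h12.2, h2.1, h2.2]
      · have h12 := (hstep (2 * i) (by omega)).1
        have h2 := hXint i hipos hi
        apply key
        rw [abs_le] at h12
        rw [abs_lt] at h2 ⊢
        constructor <;> linarith [h12.1, h12.2, h2.1, h2.2]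
  -- y-coordinate endpoint facts
  have hg0 : g 0 = f 0 := by have := hge 0; simpa using this
  have hg2 : g 2 = f 1 := by have := hge 1; simpa using this
  have hg2m : g (2 * m) = f m := hge m
  have hg2m2 : g (2 * m + 2) = f (m + 1) := by
    have := hge (m + 1); rw [show 2 * (m + 1) = 2 * m + 2 by omega] at this; exact this
  have htopY : b / 2 ≤ max (Y 0) (Y 2) := by
    obtain ⟨w, hws, hwt⟩ := htop
    rw [topSide, Set.mem_prod] at hwt
    have hw2 : w.2 = b' / 2 := hwt.2
    have hr := (seg_range hws).2
    have e0 : (δ • embH (f 0)).2 = Y 0 := by show _ = δ * (embH (g 0)).2; rw [hg0]; rfl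
    have e2 : (δ • embH (f 1)).2 = Y 2 := by show _ = δ * (embH (g 2)).2; rw [hg2]; rfl
    rw [e0, e2] at hr
    calc b / 2 ≤ b' / 2 := by linarith
    _ = w.2 := hw2.symm
    _ ≤ _ := hr
  have hbotY : min (Y (2 * m)) (Y (2 * m + 2)) ≤ -(b / 2) := by
    obtain ⟨w, hws, hwt⟩ := hbot
    rw [bottomSide, Set.mem_prod] at hwt
    have hw2 : w.2 = -b' / 2 := hwt.2
    have hr := (seg_range hws).1
    have e0 : (δ • embH (f m)).2 = Y (2 * m) := by
      show _ = δ * (embH (g (2 * m))).2; rw [hg2m]; rfl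
    have e2 : (δ • embH (f (m + 1))).2 = Y (2 * m + 2) := by
      show _ = δ * (embH (g (2 * m + 2))).2; rw [hg2m2]; rfl
    rw [e0, e2] at hr
    calc min (Y (2 * m)) (Y (2 * m + 2)) ≤ w.2 := hr
    _ = -b' / 2 := hw2
    _ ≤ -(b / 2) := by linarith
  -- select the bottom-crossing index
  have hexK : ∃ k, 1 ≤ k ∧ Y k ≤ -(b / 2) := by
    rcases min_le_iff.mp hbotY with h | h
    · exact ⟨2 * m, by omega, h⟩
    · exact ⟨2 * m + 2, by omega, h⟩
  set K := Nat.find hexK with hKdef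
  have hKspec := Nat.find_spec hexK
  have hKmin : ∀ j, j < K → ¬(1 ≤ j ∧ Y j ≤ -(b / 2)) := fun j hj => Nat.find_min hexK hj
  have hKle : K ≤ 2 * m + 2 := by
    rcases min_le_iff.mp hbotY with h | h
    · exact le_trans (Nat.find_le ⟨by omega, h⟩) (by omega)
    · exact Nat.find_le ⟨by omega, h⟩
  set q := K - 1 with hqdef
  have hq1 : q + 1 = K := by omega
  have hYq1 : Y (q + 1) ≤ -(b / 2) := by rw [hq1]; exact hKspec.2
  have hqn : q ≤ 2 * m + 1 := by omega
  have hqpos : ∀ j, 1 ≤ j → j ≤ q → -(b / 2) < Y j := by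
    intro j h1 h2
    by_contra hcon
    push_neg at hcon
    exact hKmin j (by omega) ⟨h1, hcon⟩
  -- select the top-crossing index
  have hwit : ∃ j, j ≤ q ∧ b / 2 ≤ Y j := by
    rcases le_max_iff.mp htopY with h | h
    · exact ⟨0, by omega, h⟩
    · have hK1 : K ≠ 1 := by
        intro e
        have h2 : Y K ≤ -(b / 2) := hKspec.2
        rw [e] at h2
        have hs1 := (hstep 1 (by omega)).2
        rw [abs_le] at hs1
        linarith [hs1.1, hs1.2]
      have hK2 : K ≠ 2 := by
        intro e
        have h2 : Y K ≤ -(b / 2) := hKspec.2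
        rw [e] at h2
        linarith
      exact ⟨2, by omega, h⟩
  obtain ⟨j₀, hj₀q, hj₀Y⟩ := hwit
  set P := Nat.findGreatest (fun j => b / 2 ≤ Y j) q with hPdef
  have hPq : P ≤ q := Nat.findGreatest_le q
  have hPY : b / 2 ≤ Y P := Nat.findGreatest_spec (P := fun j => b / 2 ≤ Y j) hj₀q hj₀Y
  have hPgr : ∀ k, P < k → k ≤ q → Y k < b / 2 := by
    intro k h1 h2
    exact not_le.mp (Nat.findGreatest_is_greatest (P := fun j => b / 2 ≤ Y j) h1 h2)
  have hYqlt : Y q < b / 2 := by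
    have hs := (hstep q hqn).2
    rw [abs_le] at hs
    linarith [hs.1, hs.2]
  have hPltq : P < q := by
    rcases eq_or_lt_of_le hPq with e | h
    · exfalso; rw [e] at hPY; linarith
    · exact h
  have hYqgt : -(b / 2) < Y q := hqpos q (by omega) le_rfl
  have hYP1lt : Y (P + 1) < b / 2 := hPgr (P + 1) (by omega) (by omega)
  have hYP1gt : -(b / 2) < Y (P + 1) := by
    have hs := (hstep P (by omega)).2
    rw [abs_le] at hs
    linarith [hs.1, hs.2]
  -- assemble the crossing
  refine ⟨q - P, fun i => g (P + i), by omega, ?_, ?_, ?_, ?_, ?_⟩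
  · intro i hi
    exact hadj (P + i) (by omega)
  · intro i hi
    exact hσ1 (P + i) (by omega)
  · intro i hi1 hi2
    rw [rectR, Set.mem_prod, Set.mem_Ioo, Set.mem_Ioo]
    have hx := hXa (P + i) (by omega)
    rw [abs_lt] at hx
    have hy1 := hqpos (P + i) (by omega) (by omega)
    have hy2 := hPgr (P + i) (by omega) (by omega)
    refine ⟨⟨?_, ?_⟩, ?_, ?_⟩
    · show -a / 2 < X (P + i); linarith [hx.1]
    · show X (P + i) < a / 2; exact hx.2
    · show -b / 2 < Y (P + i); linarith
    · show Y (P + i) < b / 2; exact hy2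
  · rw [topSide]
    have hx0 := hXa P (by omega)
    have hx1 := hXa (P + 1) (by omega)
    rw [abs_lt] at hx0 hx1
    exact seg_meets (u := δ • embH (g (P + 0))) (v := δ • embH (g (P + 1)))
      (by show -a / 2 ≤ X P; linarith [hx0.1]) (by show X P ≤ a / 2; linarith [hx0.2])
      (by show -a / 2 ≤ X (P + 1); linarith [hx1.1]) (by show X (P + 1) ≤ a / 2; linarith [hx1.2])
      (by show b / 2 ≤ Y P; exact hPY) (by show Y (P + 1) ≤ b / 2; linarith)
  · show (segment ℝ (δ • embH (g (P + (q - P)))) (δ • embH (g (P + (q - P) + 1))) ∩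
      bottomSide a b).Nonempty
    rw [show P + (q - P) = q from by omega, bottomSide]
    have hxq := hXa q (by omega)
    have hxq1 := hXa (q + 1) (by omega)
    rw [abs_lt] at hxq hxq1
    exact seg_meets (u := δ • embH (g q)) (v := δ • embH (g (q + 1)))
      (by show -a / 2 ≤ X q; linarith [hxq.1]) (by show X q ≤ a / 2; linarith [hxq.2])
      (by show -a / 2 ≤ X (q + 1); linarith [hxq1.1]) (by show X (q + 1) ≤ a / 2; linarith [hxq1.2])
      (by show -b / 2 ≤ Y q; linarith) (by show Y (q + 1) ≤ -b / 2; linarith)
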